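/- Fix two alternatives, n agents, and any family (u_p)_{p ∈ [0,1]} of single-peaked utility functions, one per peak. A continuous mechanism f : [0,1]^n → [0,1] satisfies anonymity and strategyproofness on this domain if and only if there exist constants α_0 ≤ α_1 ≤ … ≤ α_n in [0,1] such that f(p_1, …, p_n) = med(p_1, …, p_n, α_0, α_1, …, α_n) for every profile. -/

import Mathlib

/-- `u` is single-peaked on `[0,1]` with peak `p`. -/
def SinglePeaked (p : ℝ) (u : ℝ → ℝ) : Prop :=
  ∀ q ∈ Set.Icc (0:ℝ) 1, q ≠ p → ∀ l ∈ Set.Ioo (0:ℝ) 1,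
    u q < u (l * p + (1 - l) * q) ∧ u (l * p + (1 - l) * q) < u p

/-- Median (middle element of the sorted list, for lists of odd length). -/
noncomputable def med (l : List ℝ) : ℝ :=
  (l.insertionSort (· ≤ ·)).getD (l.length / 2) 0

open List

lemma med_perm {l l' : List ℝ} (h : l.Perm l') : med l = med l' := by
  have hs : l.insertionSort (· ≤ ·) = l'.insertionSort (· ≤ ·) :=
    (fun hp h1 h2 => List.Perm.eq_of_pairwise' h1 h2 hp)
      (((l.perm_insertionSort _).trans h).trans (l'.perm_insertionSort _).symm)
      (List.pairwise_insertionSort _ _) (List.pairwise_insertionSort _ _)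
  rw [med, med, hs, h.length_eq]

lemma med_counts {l : List ℝ} {k : ℕ} (h : l.length = 2*k+1) :
    k+1 ≤ l.countP (fun x => decide (x ≤ med l)) ∧
    k+1 ≤ l.countP (fun x => decide (med l ≤ x)) := by
  set s := l.insertionSort (· ≤ ·) with hs
  have hperm := l.perm_insertionSort (· ≤ ·)
  have hlen : s.length = 2*k+1 := by rw [hperm.length_eq, h]
  have hk : k < s.length := by omega
  have hmed : med l = s[k] := by
    rw [med, ← hs, h]
    have : (2*k+1)/2 = k := by omega
    rw [this, List.getD_eq_getElem _ _ hk]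
  have hsort : s.Pairwise (· ≤ ·) := List.pairwise_insertionSort _ _
  have hpair := List.pairwise_iff_getElem.1 hsort
  have hrel : ∀ i (hi : i < s.length), i ≤ k → s[i] ≤ s[k] := by
    intro i hi hik
    rcases eq_or_lt_of_le hik with rfl | hik
    · exact le_refl _
    · exact hpair i k hi hk hik
  have hrel' : ∀ i (hi : i < s.length), k ≤ i → s[k] ≤ s[i] := by
    intro i hi hik
    rcases eq_or_lt_of_le hik with rfl | hik
    · exact le_refl _
    · exact hpair k i hk hi hik
  constructor
  · rw [← hperm.countP_eq]
    calc k+1 = (s.take (k+1)).length := by rw [List.length_take]; omega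
    _ = (s.take (k+1)).countP (fun x => decide (x ≤ med l)) := by
        symm; rw [List.countP_eq_length]
        intro a ha
        obtain ⟨i, hi, rfl⟩ := List.mem_iff_getElem.1 ha
        rw [List.getElem_take]
        have hi' : i < s.length := lt_of_lt_of_le hi (by simpa using List.length_take_le _ _)
        have hik : i ≤ k := by
          have := hi; rw [List.length_take] at this; omega
        simp only [decide_eq_true_eq, hmed]
        exact hrel i hi' hik
    _ ≤ s.countP (fun x => decide (x ≤ med l)) := by
        conv_rhs => rw [← List.take_append_drop (k+1) s]
        rw [List.countP_append]; omega
  · rw [← hperm.countP_eq]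
    calc k+1 = (s.drop k).length := by rw [List.length_drop]; omega
    _ = (s.drop k).countP (fun x => decide (med l ≤ x)) := by
        symm; rw [List.countP_eq_length]
        intro a ha
        obtain ⟨i, hi, rfl⟩ := List.mem_iff_getElem.1 ha
        rw [List.getElem_drop]
        have hi' : k + i < s.length := by
          rw [List.length_drop] at hi; omega
        simp only [decide_eq_true_eq, hmed]
        exact hrel' (k+i) hi' (by omega)
    _ ≤ s.countP (fun x => decide (med l ≤ x)) := by
        conv_rhs => rw [← List.take_append_drop k s]
        rw [List.countP_append]; omega

lemma med_le {l : List ℝ} {k : ℕ} {y : ℝ} (h : l.length = 2*k+1)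
    (hc : k+1 ≤ l.countP (fun x => decide (x ≤ y))) : med l ≤ y := by
  by_contra hlt
  push_neg at hlt
  have h2 := (med_counts h).2
  have hd : l.countP (fun x => decide (med l ≤ x)) ≤
      l.countP (fun x => !decide (x ≤ y)) := by
    apply List.countP_mono_left
    intro x _ hx
    simp only [decide_eq_true_eq] at hx ⊢
    simp only [Bool.not_eq_true', decide_eq_false_iff_not, not_le]
    linarith
  have := List.length_eq_countP_add_countP (fun x => decide (x ≤ y)) (l := l)
  simp only [Bool.not_eq_true', decide_eq_false_iff_not, decide_not, Bool.decide_coe] at hd this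
  omega

lemma le_med {l : List ℝ} {k : ℕ} {y : ℝ} (h : l.length = 2*k+1)
    (hc : k+1 ≤ l.countP (fun x => decide (y ≤ x))) : y ≤ med l := by
  by_contra hlt
  push_neg at hlt
  have h1 := (med_counts h).1
  have hd : l.countP (fun x => decide (x ≤ med l)) ≤
      l.countP (fun x => !decide (y ≤ x)) := by
    apply List.countP_mono_left
    intro x _ hx
    simp only [decide_eq_true_eq] at hx ⊢
    simp only [Bool.not_eq_true', decide_eq_false_iff_not, not_le]
    linarith
  have := List.length_eq_countP_add_countP (fun x => decide (y ≤ x)) (l := l)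
  simp only [Bool.not_eq_true', decide_eq_false_iff_not, decide_not, Bool.decide_coe] at hd this
  omega

lemma med_eq {l : List ℝ} {k : ℕ} {x : ℝ} (h : l.length = 2*k+1)
    (h1 : k+1 ≤ l.countP (fun z => decide (z ≤ x)))
    (h2 : k+1 ≤ l.countP (fun z => decide (x ≤ z))) : med l = x :=
  le_antisymm (med_le h h1) (le_med h h2)

lemma countP_ofFn {m : ℕ} (g : Fin m → ℝ) (p : ℝ → Bool) :
    (List.ofFn g).countP p = ∑ i, if p (g i) then 1 else 0 := by
  induction m with
  | zero => simp [List.ofFn_zero, List.countP_nil]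
  | succ m ih =>
    rw [List.ofFn_succ, List.countP_cons, ih, Fin.sum_univ_succ]
    by_cases h : p (g 0) <;> simp [h] <;> omega

lemma sp_lt_peak {p : ℝ} {u : ℝ → ℝ} (h : SinglePeaked p u) {q : ℝ}
    (hq : q ∈ Set.Icc (0:ℝ) 1) (hne : q ≠ p) : u q < u p := by
  have := h q hq hne (1/2) (by norm_num)
  linarith [this.1, this.2]

lemma sp_between {p : ℝ} {u : ℝ → ℝ} (h : SinglePeaked p u) {q x : ℝ}
    (hq : q ∈ Set.Icc (0:ℝ) 1) (hne : q ≠ p)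
    (hx : x ∈ Set.Ioo (min p q) (max p q)) : u q < u x := by
  rcases hx with ⟨hx1, hx2⟩
  have hpq : p ≠ q := fun h' => hne h'.symm
  rcases lt_or_gt_of_ne hpq with hc | hc
  · rw [min_eq_left hc.le] at hx1
    rw [max_eq_right hc.le] at hx2
    set l := (q - x) / (q - p) with hl
    have hlmem : l ∈ Set.Ioo (0:ℝ) 1 := by
      constructor
      · exact div_pos (by linarith) (by linarith)
      · exact (div_lt_one (by linarith)).2 (by linarith)
    have h0 : q - p ≠ 0 := by intro h0; rw [sub_eq_zero] at h0; exact hpq h0.symm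
    have heq : l * (p - q) = x - q := by
      rw [hl, div_mul_eq_mul_div]
      rw [show (q - x) * (p - q) = (x - q) * (q - p) by ring, mul_div_assoc, div_self h0, mul_one]
    have hg : l * p + (1 - l) * q = q + l * (p - q) := by ring
    have hxeq : x = l * p + (1 - l) * q := by rw [hg]; linarith
    have := (h q hq hne l hlmem).1
    rwa [← hxeq] at this
  · rw [min_eq_right hc.le] at hx1
    rw [max_eq_left hc.le] at hx2
    set l := (x - q) / (p - q) with hl
    have hlmem : l ∈ Set.Ioo (0:ℝ) 1 := by
      constructor
      · exact div_pos (by linarith) (by linarith)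
      · exact (div_lt_one (by linarith)).2 (by linarith)
    have h0 : p - q ≠ 0 := sub_ne_zero.2 hpq
    have heq : l * (p - q) = x - q := by
      rw [hl, div_mul_eq_mul_div, mul_div_assoc, div_self h0, mul_one]
    have hg : l * p + (1 - l) * q = q + l * (p - q) := by ring
    have hxeq : x = l * p + (1 - l) * q := by rw [hg]; linarith
    have := (h q hq hne l hlmem).1
    rwa [← hxeq] at this

lemma one_dim (u : ℝ → ℝ → ℝ) (hu : ∀ p ∈ Set.Icc (0:ℝ) 1, SinglePeaked p (u p))
    (h : ℝ → ℝ) (hr : ∀ t ∈ Set.Icc (0:ℝ) 1, h t ∈ Set.Icc (0:ℝ) 1)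
    (hc : ContinuousOn h (Set.Icc 0 1))
    (hsp : ∀ t ∈ Set.Icc (0:ℝ) 1, ∀ t' ∈ Set.Icc (0:ℝ) 1, u t (h t') ≤ u t (h t)) :
    h 0 ≤ h 1 ∧ ∀ t ∈ Set.Icc (0:ℝ) 1, h t = max (h 0) (min t (h 1)) := by
  have h01 : (0:ℝ) ∈ Set.Icc (0:ℝ) 1 := by norm_num
  have h11 : (1:ℝ) ∈ Set.Icc (0:ℝ) 1 := by norm_num
  -- excluded intervals
  have excl1 : ∀ t ∈ Set.Icc (0:ℝ) 1, ∀ t' ∈ Set.Icc (0:ℝ) 1,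
      ¬ (h t < h t' ∧ h t' ≤ t) := by
    rintro t ht t' ht' ⟨hlt, hle⟩
    have hsp' := hsp t ht t' ht'
    have hne : h t ≠ t := by intro he; rw [he] at hlt; linarith
    rcases eq_or_lt_of_le hle with rfl | hlt2
    · exact absurd hsp' (not_le.2 (sp_lt_peak (hu _ ht) (hr _ ht) hne))
    · have : u t (h t) < u t (h t') := by
        apply sp_between (hu _ ht) (hr t ht) hne
        constructor
        · rw [min_def]; split_ifs <;> linarith
        · rw [max_def]; split_ifs <;> linarith
      linarith
  have excl2 : ∀ t ∈ Set.Icc (0:ℝ) 1, ∀ t' ∈ Set.Icc (0:ℝ) 1,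
      ¬ (t ≤ h t' ∧ h t' < h t) := by
    rintro t ht t' ht' ⟨hle, hlt⟩
    have hsp' := hsp t ht t' ht'
    have hne : h t ≠ t := by intro he; rw [he] at hlt; linarith
    rcases eq_or_lt_of_le hle with he | hlt2
    · rw [← he] at hsp'
      exact absurd hsp' (not_le.2 (sp_lt_peak (hu _ ht) (hr t ht) hne))
    · have : u t (h t) < u t (h t') := by
        apply sp_between (hu _ ht) (hr t ht) hne
        constructor
        · rw [min_def]; split_ifs <;> linarith
        · rw [max_def]; split_ifs <;> linarith
      linarith
  -- h t < t implies h is everywhere ≤ h t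
  have hlow : ∀ t ∈ Set.Icc (0:ℝ) 1, h t < t → ∀ s ∈ Set.Icc (0:ℝ) 1, h s ≤ h t := by
    intro t ht hlt s hs
    by_contra hgt
    push_neg at hgt
    by_cases hst : h s ≤ t
    · exact excl1 t ht s hs ⟨hgt, hst⟩
    · push_neg at hst
      -- IVT: find r with h r = t
      have : ∃ r ∈ Set.uIcc t s, h r = t := by
        have hsub : Set.uIcc t s ⊆ Set.Icc (0:ℝ) 1 := by
          rw [Set.uIcc]
          intro x hx
          exact ⟨le_trans (le_min ht.1 hs.1) hx.1, le_trans hx.2 (max_le ht.2 hs.2)⟩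
        have hcm : ContinuousOn h (Set.uIcc t s) := hc.mono hsub
        have : t ∈ Set.uIcc (h t) (h s) := by
          rw [Set.uIcc_of_le (by linarith)]
          exact ⟨hlt.le, hst.le⟩
        obtain ⟨r, hr1, hr2⟩ := intermediate_value_uIcc hcm this
        exact ⟨r, hr1, hr2⟩
      obtain ⟨r, hr1, hr2⟩ := this
      have hrIcc : r ∈ Set.Icc (0:ℝ) 1 := by
        have : Set.uIcc t s ⊆ Set.Icc (0:ℝ) 1 := by
          rw [Set.uIcc]
          intro x hx
          constructor
          · exact le_trans (le_min ht.1 hs.1) hx.1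
          · exact le_trans hx.2 (max_le ht.2 hs.2)
        exact this hr1
      exact excl1 t ht r hrIcc ⟨by rw [hr2]; exact hlt, by rw [hr2]⟩
  have hhigh : ∀ t ∈ Set.Icc (0:ℝ) 1, t < h t → ∀ s ∈ Set.Icc (0:ℝ) 1, h t ≤ h s := by
    intro t ht hlt s hs
    by_contra hgt
    push_neg at hgt
    by_cases hst : t ≤ h s
    · exact excl2 t ht s hs ⟨hst, hgt⟩
    · push_neg at hst
      have : ∃ r ∈ Set.uIcc t s, h r = t := by
        have hsub : Set.uIcc t s ⊆ Set.Icc (0:ℝ) 1 := by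
          rw [Set.uIcc]
          intro x hx
          exact ⟨le_trans (le_min ht.1 hs.1) hx.1, le_trans hx.2 (max_le ht.2 hs.2)⟩
        have hcm : ContinuousOn h (Set.uIcc t s) := hc.mono hsub
        have : t ∈ Set.uIcc (h t) (h s) := by
          rw [Set.uIcc_of_ge (by linarith)]
          exact ⟨hst.le, hlt.le⟩
        obtain ⟨r, hr1, hr2⟩ := intermediate_value_uIcc hcm this
        exact ⟨r, hr1, hr2⟩
      obtain ⟨r, hr1, hr2⟩ := this
      have hrIcc : r ∈ Set.Icc (0:ℝ) 1 := by
        have : Set.uIcc t s ⊆ Set.Icc (0:ℝ) 1 := by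
          rw [Set.uIcc]
          intro x hx
          exact ⟨le_trans (le_min ht.1 hs.1) hx.1, le_trans hx.2 (max_le ht.2 hs.2)⟩
        exact this hr1
      exact excl2 t ht r hrIcc ⟨by rw [hr2], by rw [hr2]; exact hlt⟩
  have h01le : h 0 ≤ h 1 := by
    by_contra hgt
    push_neg at hgt
    rcases eq_or_lt_of_le (hr 0 h01).1 with he | hpos
    · have := (hr 1 h11).1; rw [← he] at hgt; linarith
    · exact absurd (hhigh 0 h01 hpos 1 h11) (not_le.2 hgt)
  refine ⟨h01le, ?_⟩
  intro t ht
  rcases lt_trichotomy (h t) t with hlt | heq | hgt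
  · have hht1 : h t = h 1 := by
      have l1 : h 1 ≤ h t := hlow t ht hlt 1 h11
      have : h 1 < 1 := by linarith [ht.2]
      exact le_antisymm (hlow 1 h11 this t ht) l1
    rw [← hht1, min_eq_right (by linarith), max_eq_right (by rw [hht1]; exact h01le)]
  · have hle0 : h 0 ≤ t := by
      by_contra hc'
      push_neg at hc'
      have : 0 < h 0 := lt_of_le_of_lt ht.1 hc'
      have := hhigh 0 h01 this t ht
      linarith
    have hle1 : t ≤ h 1 := by
      by_contra hc'
      push_neg at hc'
      have : h 1 < 1 := lt_of_lt_of_le hc' ht.2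
      have := hlow 1 h11 this t ht
      linarith
    rw [heq, min_eq_left hle1, max_eq_right hle0]
  · have hht0 : h t = h 0 := by
      have l1 : h t ≤ h 0 := hhigh t ht hgt 0 h01
      have : 0 < h 0 := by linarith [ht.1]
      exact le_antisymm l1 (hhigh 0 h01 this t ht)
    have : min t (h 1) = t := min_eq_left (by rw [← hht0] at h01le; linarith)
    rw [this, ← hht0, max_eq_left hgt.le]

lemma sum_ite_lt (m k : ℕ) : ∑ i : Fin m, (if (i:ℕ) < k then 1 else 0) = min k m := by
  rw [Fin.sum_univ_eq_sum_range (fun j => if j < k then 1 else 0)]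
  induction m with
  | zero => simp
  | succ m ih =>
    rw [Finset.sum_range_succ, ih]
    by_cases h : m < k <;> simp [h] <;> omega

lemma sum_ite_ge (m k : ℕ) : ∑ i : Fin m, (if (i:ℕ) < k then 0 else 1) = m - k := by
  rw [Fin.sum_univ_eq_sum_range (fun j => if j < k then 0 else 1)]
  induction m with
  | zero => simp
  | succ m ih =>
    rw [Finset.sum_range_succ, ih]
    by_cases h : m < k <;> simp [h] <;> omega

lemma step_med {m : ℕ} (b : Fin (m+1) → ℝ) (hbr : ∀ j, b j ∈ Set.Icc (0:ℝ) 1)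
    (hbm : Monotone b) (k : Fin (m+1)) :
    med (List.ofFn (fun i : Fin m => if (i:ℕ) < (k:ℕ) then (1:ℝ) else 0) ++ List.ofFn b)
      = b k := by
  have hk : (k:ℕ) ≤ m := by omega
  apply med_eq (k := m)
  · simp [List.length_append]; omega
  · rw [List.countP_append, countP_ofFn, countP_ofFn]
    have c1 : ∑ i : Fin m, (if (i:ℕ) < (k:ℕ) then 0 else 1) ≤
        ∑ i : Fin m, (if (decide ((if (i:ℕ) < (k:ℕ) then (1:ℝ) else 0) ≤ b k)) then 1 else 0) := by
      apply Finset.sum_le_sum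
      intro i _
      by_cases h : (i:ℕ) < (k:ℕ)
      · simp [h]
      · simp [h, (hbr k).1]
    have c2 : (∑ j : Fin (m+1), if (j:ℕ) < (k:ℕ)+1 then 1 else 0) ≤
        ∑ j : Fin (m+1), (if (decide (b j ≤ b k)) then 1 else 0) := by
      apply Finset.sum_le_sum
      intro j _
      by_cases h : (j:ℕ) < (k:ℕ)+1
      · have : b j ≤ b k := hbm (by omega : j ≤ k)
        simp [h, this]
      · simp [h]
    rw [sum_ite_ge] at c1
    rw [sum_ite_lt] at c2
    omega
  · rw [List.countP_append, countP_ofFn, countP_ofFn]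
    have c1 : ∑ i : Fin m, (if (i:ℕ) < (k:ℕ) then 1 else 0) ≤
        ∑ i : Fin m, (if (decide (b k ≤ (if (i:ℕ) < (k:ℕ) then (1:ℝ) else 0))) then 1 else 0) := by
      apply Finset.sum_le_sum
      intro i _
      by_cases h : (i:ℕ) < (k:ℕ)
      · simp [h, (hbr k).2]
      · simp [h]
    have c2 : ∑ j : Fin (m+1), (if ((k:ℕ) ≤ (j:ℕ)) then 1 else 0) ≤
        ∑ j : Fin (m+1), (if (decide (b k ≤ b j)) then 1 else 0) := by
      apply Finset.sum_le_sum
      intro j _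
      by_cases h : (k:ℕ) ≤ (j:ℕ)
      · have : b k ≤ b j := hbm (by omega : k ≤ j)
        simp [h, this]
      · simp [h]
    have c3 : ∑ j : Fin (m+1), (if ((k:ℕ) ≤ (j:ℕ)) then 1 else 0) = m + 1 - (k:ℕ) := by
      have : ∀ j : Fin (m+1), (if ((k:ℕ) ≤ (j:ℕ)) then 1 else 0)
          = (if ((j:ℕ) < (k:ℕ)) then 0 else 1) := by
        intro j
        by_cases h : (k:ℕ) ≤ (j:ℕ)
        · rw [if_pos h, if_neg (by omega)]
        · rw [if_neg h, if_pos (by omega)]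
      rw [Finset.sum_congr rfl (fun j _ => this j), sum_ite_ge]
    rw [sum_ite_lt] at c1
    rw [c3] at c2
    omega

lemma backward {n : ℕ} (u : ℝ → ℝ → ℝ) (hu : ∀ p ∈ Set.Icc (0:ℝ) 1, SinglePeaked p (u p))
    (f : (Fin n → ℝ) → ℝ)
    (hfr : ∀ P : Fin n → ℝ, (∀ i, P i ∈ Set.Icc (0:ℝ) 1) → f P ∈ Set.Icc (0:ℝ) 1)
    (a : Fin (n+1) → ℝ)
    (hf : ∀ P : Fin n → ℝ, (∀ i, P i ∈ Set.Icc (0:ℝ) 1) →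
      f P = med (List.ofFn P ++ List.ofFn a)) :
    (∀ P : Fin n → ℝ, (∀ i, P i ∈ Set.Icc (0:ℝ) 1) →
        ∀ σ : Equiv.Perm (Fin n), f (P ∘ σ) = f P) ∧
      (∀ P : Fin n → ℝ, (∀ i, P i ∈ Set.Icc (0:ℝ) 1) → ∀ i, ∀ p' ∈ Set.Icc (0:ℝ) 1,
        u (P i) (f (Function.update P i p')) ≤ u (P i) (f P)) := by
  constructor
  · intro P hP σ
    rw [hf (P ∘ σ) (fun i => hP (σ i)), hf P hP]
    exact med_perm ((σ.ofFn_comp_perm P).append_right _)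
  · intro P hP i p' hp'
    set P' := Function.update P i p' with hP'def
    have hP' : ∀ j, P' j ∈ Set.Icc (0:ℝ) 1 := by
      intro j
      rcases eq_or_ne j i with rfl | hne
      · simp [hP'def]; exact hp'
      · simp [hP'def, Function.update_of_ne hne]; exact hP j
    set p := P i with hpdef
    have hp : p ∈ Set.Icc (0:ℝ) 1 := hP i
    set m := f P with hmdef
    set m' := f P' with hm'def
    have hm : m ∈ Set.Icc (0:ℝ) 1 := hfr P hP
    have hm'Icc : m' ∈ Set.Icc (0:ℝ) 1 := hfr P' hP'
    have hL : (List.ofFn P ++ List.ofFn a).length = 2*n+1 := by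
      simp [List.length_append]; omega
    have hL' : (List.ofFn P' ++ List.ofFn a).length = 2*n+1 := by
      simp [List.length_append]; omega
    have hmm : m = med (List.ofFn P ++ List.ofFn a) := hf P hP
    have hmm' : m' = med (List.ofFn P' ++ List.ofFn a) := hf P' hP'
    -- count comparison: predicates true at `p` stay or grow... specifically:
    have hcount : ∀ q : ℝ → Bool, q p = false →
        (List.ofFn P).countP q ≤ (List.ofFn P').countP q := by
      intro q hq
      rw [countP_ofFn, countP_ofFn]
      apply Finset.sum_le_sum
      intro j _
      rcases eq_or_ne j i with rfl | hne
      · rw [← hpdef, hq]; simp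
      · rw [hP'def, Function.update_of_ne hne]
    rcases lt_trichotomy p m with hpm | hpm | hpm
    · -- p < m : show m ≤ m'
      have hcnt : n+1 ≤ (List.ofFn P' ++ List.ofFn a).countP (fun x => decide (m ≤ x)) := by
        have h1 := (med_counts hL).2
        rw [← hmm] at h1
        rw [List.countP_append] at h1 ⊢
        have := hcount (fun x => decide (m ≤ x)) (by simp; linarith)
        omega
      have hmle : m ≤ m' := by rw [hmm']; exact le_med hL' hcnt
      rcases eq_or_lt_of_le hmle with he | hlt
      · rw [← he]
      · have : u p m' < u p m := by
          apply sp_between (hu p hp) hm'Icc (by intro he; rw [he] at hlt; linarith)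
          constructor
          · rw [min_def]; split_ifs <;> linarith
          · rw [max_def]; split_ifs <;> linarith
        linarith
    · -- p = m
      rcases eq_or_ne m' p with he | hne
      · rw [he, ← hpm]
      · rw [← hpm]
        exact (sp_lt_peak (hu p hp) hm'Icc hne).le
    · -- m < p : show m' ≤ m
      have hcnt : n+1 ≤ (List.ofFn P' ++ List.ofFn a).countP (fun x => decide (x ≤ m)) := by
        have h1 := (med_counts hL).1
        rw [← hmm] at h1
        rw [List.countP_append] at h1 ⊢
        have := hcount (fun x => decide (x ≤ m)) (by simp; linarith)
        omega
      have hmle : m' ≤ m := by rw [hmm']; exact med_le hL' hcnt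
      rcases eq_or_lt_of_le hmle with he | hlt
      · rw [he]
      · have : u p m' < u p m := by
          apply sp_between (hu p hp) hm'Icc (by intro he; rw [he] at hlt; linarith)
          constructor
          · rw [min_def]; split_ifs <;> linarith
          · rw [max_def]; split_ifs <;> linarith
        linarith

def extendPerm {n : ℕ} (σ : Equiv.Perm (Fin n)) : Equiv.Perm (Fin (n+1)) where
  toFun := Fin.lastCases (Fin.last n) (fun j => (σ j).castSucc)
  invFun := Fin.lastCases (Fin.last n) (fun j => (σ.symm j).castSucc)
  left_inv := by
    intro i
    induction i using Fin.lastCases with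
    | last => simp
    | cast j => simp
  right_inv := by
    intro i
    induction i using Fin.lastCases with
    | last => simp
    | cast j => simp

lemma forward (u : ℝ → ℝ → ℝ) (hu : ∀ p ∈ Set.Icc (0:ℝ) 1, SinglePeaked p (u p)) :
    ∀ (n : ℕ) (f : (Fin n → ℝ) → ℝ),
    (∀ P : Fin n → ℝ, (∀ i, P i ∈ Set.Icc (0:ℝ) 1) → f P ∈ Set.Icc (0:ℝ) 1) →
    ContinuousOn f {P : Fin n → ℝ | ∀ i, P i ∈ Set.Icc (0:ℝ) 1} →
    (∀ P : Fin n → ℝ, (∀ i, P i ∈ Set.Icc (0:ℝ) 1) →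
        ∀ σ : Equiv.Perm (Fin n), f (P ∘ σ) = f P) →
    (∀ P : Fin n → ℝ, (∀ i, P i ∈ Set.Icc (0:ℝ) 1) → ∀ i, ∀ p' ∈ Set.Icc (0:ℝ) 1,
        u (P i) (f (Function.update P i p')) ≤ u (P i) (f P)) →
    ∃ a : Fin (n + 1) → ℝ, (∀ k, a k ∈ Set.Icc (0:ℝ) 1) ∧ Monotone a ∧
        ∀ P : Fin n → ℝ, (∀ i, P i ∈ Set.Icc (0:ℝ) 1) →
          f P = med (List.ofFn P ++ List.ofFn a) := by
  intro n
  induction n with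
  | zero =>
    intro f hfr _ _ _
    refine ⟨fun _ => f (fun i => i.elim0), fun _ => hfr _ (fun i => i.elim0),
      monotone_const, ?_⟩
    intro P _
    have hPe : P = fun i => i.elim0 := funext fun i => i.elim0
    rw [hPe]
    simp [med, List.insertionSort, List.orderedInsert]
  | succ n IH =>
    intro f hfr hfc hanon hsp
    have snocMem : ∀ {Q : Fin n → ℝ}, (∀ i, Q i ∈ Set.Icc (0:ℝ) 1) →
        ∀ {c : ℝ}, c ∈ Set.Icc (0:ℝ) 1 → ∀ i, (Fin.snoc Q c : Fin (n+1) → ℝ) i ∈ Set.Icc (0:ℝ) 1 := by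
      intro Q hQ c hc i
      induction i using Fin.lastCases with
      | last => rw [Fin.snoc_last]; exact hc
      | cast j => rw [Fin.snoc_castSucc]; exact hQ j
    have contSnoc : ∀ c : ℝ, Continuous (fun Q : Fin n → ℝ => (Fin.snoc Q c : Fin (n+1) → ℝ)) := by
      intro c
      apply continuous_pi
      intro i
      induction i using Fin.lastCases with
      | last => simp only [Fin.snoc_last]; exact continuous_const
      | cast j => simp only [Fin.snoc_castSucc]; exact continuous_apply j
    have key : ∀ c ∈ Set.Icc (0:ℝ) 1, ∃ b : Fin (n+1) → ℝ,
        (∀ k, b k ∈ Set.Icc (0:ℝ) 1) ∧ Monotone b ∧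
        ∀ Q : Fin n → ℝ, (∀ i, Q i ∈ Set.Icc (0:ℝ) 1) →
          f (Fin.snoc Q c) = med (List.ofFn Q ++ List.ofFn b) := by
      intro c hc
      apply IH (fun Q => f (Fin.snoc Q c))
      · intro Q hQ; exact hfr _ (snocMem hQ hc)
      · apply ContinuousOn.comp hfc (contSnoc c).continuousOn
        intro Q hQ
        exact snocMem hQ hc
      · intro Q hQ σ
        have he : (Fin.snoc Q c : Fin (n+1) → ℝ) ∘ (extendPerm σ) = Fin.snoc (Q ∘ σ) c := by
          funext i
          induction i using Fin.lastCases with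
          | last =>
            show (Fin.snoc Q c : Fin (n+1) → ℝ) (extendPerm σ (Fin.last n)) = _
            simp [extendPerm, Fin.snoc_last]
          | cast j =>
            show (Fin.snoc Q c : Fin (n+1) → ℝ) (extendPerm σ j.castSucc) = _
            simp [extendPerm, Fin.snoc_castSucc]
        calc f (Fin.snoc (Q ∘ σ) c) = f ((Fin.snoc Q c : Fin (n+1) → ℝ) ∘ extendPerm σ) := by
              rw [he]
        _ = f (Fin.snoc Q c) := hanon _ (snocMem hQ hc) _
      · intro Q hQ i p' hp'
        have hupd : Function.update (Fin.snoc Q c : Fin (n+1) → ℝ) i.castSucc p'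
            = Fin.snoc (Function.update Q i p') c := by rw [← Fin.snoc_update]
        have h1 := hsp (Fin.snoc Q c) (snocMem hQ hc) i.castSucc p' hp'
        rw [hupd] at h1
        simpa [Fin.snoc_castSucc] using h1
    obtain ⟨b, hbr, hbm, hb⟩ := key 0 ⟨le_refl 0, zero_le_one⟩
    obtain ⟨cb, hcr, hcm, hcb⟩ := key 1 ⟨zero_le_one, le_refl 1⟩
    have hone : ∀ Q : Fin n → ℝ, (∀ i, Q i ∈ Set.Icc (0:ℝ) 1) →
        f (Fin.snoc Q 0) ≤ f (Fin.snoc Q 1) ∧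
        ∀ t ∈ Set.Icc (0:ℝ) 1,
          f (Fin.snoc Q t) = max (f (Fin.snoc Q 0)) (min t (f (Fin.snoc Q 1))) := by
      intro Q hQ
      apply one_dim u hu (fun t => f (Fin.snoc Q t))
      · intro t ht; exact hfr _ (snocMem hQ ht)
      · apply ContinuousOn.comp hfc
        · apply Continuous.continuousOn
          apply continuous_pi
          intro i
          induction i using Fin.lastCases with
          | last => simp only [Fin.snoc_last]; exact continuous_id
          | cast j => simp only [Fin.snoc_castSucc]; exact continuous_const
        · intro t ht
          exact snocMem hQ ht
      · intro t ht t' ht'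
        have h1 := hsp (Fin.snoc Q t) (snocMem hQ ht) (Fin.last n) t' ht'
        rw [Fin.update_snoc_last] at h1
        simpa [Fin.snoc_last] using h1
    -- step profiles
    set A : ℕ → ℝ := fun k => f (fun i : Fin (n+1) => if (i:ℕ) < k then 1 else 0) with hA
    set E : Fin (n+1) → (Fin n → ℝ) := fun k i => if (i:ℕ) < (k:ℕ) then 1 else 0 with hEdef
    have hstepbox : ∀ k : ℕ, ∀ i : Fin (n+1),
        (if (i:ℕ) < k then (1:ℝ) else 0) ∈ Set.Icc (0:ℝ) 1 := by
      intro k i; split_ifs <;> norm_num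
    have hE : ∀ k, ∀ i, E k i ∈ Set.Icc (0:ℝ) 1 := by
      intro k i; rw [hEdef]; dsimp only; split_ifs <;> norm_num
    have hAr : ∀ k, A k ∈ Set.Icc (0:ℝ) 1 := by
      intro k; exact hfr _ (hstepbox k)
    have hid1 : ∀ k : Fin (n+1),
        (Fin.snoc (E k) 0 : Fin (n+1) → ℝ) = fun i : Fin (n+1) => if (i:ℕ) < (k:ℕ) then 1 else 0 := by
      intro k
      funext i
      induction i using Fin.lastCases with
      | last =>
        rw [Fin.snoc_last]
        have : ¬ ((Fin.last n : Fin (n+1)) : ℕ) < (k:ℕ) := by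
          simp [Fin.last]; omega
        rw [if_neg this]
      | cast j =>
        rw [Fin.snoc_castSucc, hEdef]
        simp only [Fin.coe_castSucc]
    have hid2 : ∀ k : Fin (n+1), f (Fin.snoc (E k) 1) = A ((k:ℕ)+1) := by
      intro k
      have hprof : (fun i : Fin (n+1) => if (i:ℕ) < (k:ℕ)+1 then (1:ℝ) else 0)
          ∘ (Equiv.swap k (Fin.last n)) = Fin.snoc (E k) 1 := by
        funext i
        induction i using Fin.lastCases with
        | last =>
          show (if ((Equiv.swap k (Fin.last n) (Fin.last n) : Fin (n+1)) : ℕ) < (k:ℕ)+1 then (1:ℝ) else 0) = _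
          rw [Equiv.swap_apply_right, Fin.snoc_last, if_pos (by omega)]
        | cast j =>
          show (if ((Equiv.swap k (Fin.last n) j.castSucc : Fin (n+1)) : ℕ) < (k:ℕ)+1 then (1:ℝ) else 0) = _
          rw [Fin.snoc_castSucc, hEdef]
          by_cases hik : j.castSucc = k
          · rw [hik, Equiv.swap_apply_left]
            have h1 : ¬ ((Fin.last n : Fin (n+1)) : ℕ) < (k:ℕ)+1 := by
              have : (k:ℕ) = (j:ℕ) := by rw [← hik]; simp
              have hj : (j:ℕ) < n := j.isLt
              simp [Fin.last]; omega
            rw [if_neg h1]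
            have : ¬ ((j:ℕ) < (k:ℕ)) := by
              have : (k:ℕ) = (j:ℕ) := by rw [← hik]; simp
              omega
            dsimp only
            rw [if_neg this]
          · rw [Equiv.swap_apply_of_ne_of_ne hik (Fin.castSucc_lt_last j).ne]
            have hjk : (j:ℕ) ≠ (k:ℕ) := by
              intro h
              apply hik
              apply Fin.ext
              simpa using h
            dsimp only
            simp only [Fin.coe_castSucc]
            by_cases h2 : (j:ℕ) < (k:ℕ)
            · rw [if_pos (by omega), if_pos h2]
            · rw [if_neg (by omega), if_neg h2]
      calc f (Fin.snoc (E k) 1) = f ((fun i : Fin (n+1) => if (i:ℕ) < (k:ℕ)+1 then (1:ℝ) else 0)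
              ∘ (Equiv.swap k (Fin.last n))) := by rw [hprof]
      _ = A ((k:ℕ)+1) := hanon _ (hstepbox _) _
    have hbA : ∀ k : Fin (n+1), b k = A (k:ℕ) := by
      intro k
      have h1 := hb (E k) (hE k)
      have h2 := step_med b hbr hbm k
      have h3 : f (Fin.snoc (E k) 0) = A (k:ℕ) := by rw [hid1 k]
      rw [← h3]
      rw [h1, ← h2]
    have hcA : ∀ k : Fin (n+1), cb k = A ((k:ℕ)+1) := by
      intro k
      have h1 := hcb (E k) (hE k)
      have h2 := step_med cb hcr hcm k
      rw [← hid2 k, h1, ← h2]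
    have hAmono : ∀ k : Fin (n+1), A (k:ℕ) ≤ A ((k:ℕ)+1) := by
      intro k
      have h1 := (hone (E k) (hE k)).1
      rw [hid2 k] at h1
      have h3 : f (Fin.snoc (E k) 0) = A (k:ℕ) := by rw [hid1 k]
      rwa [h3] at h1
    refine ⟨fun k => A (k:ℕ), fun k => hAr _, ?_, ?_⟩
    · rw [Fin.monotone_iff_le_succ]
      intro k
      have := hAmono k
      simpa using this
    · intro P hP
      set Q : Fin n → ℝ := Fin.init P with hQdef
      set t : ℝ := P (Fin.last n) with htdef
      have hQ : ∀ i, Q i ∈ Set.Icc (0:ℝ) 1 := fun i => hP _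
      have ht : t ∈ Set.Icc (0:ℝ) 1 := hP _
      have hPsnoc : (Fin.snoc Q t : Fin (n+1) → ℝ) = P := Fin.snoc_init_self P
      rw [← hPsnoc]
      have hform := (hone Q hQ).2 t ht
      have hAmono' : ∀ j k : ℕ, j ≤ k → k ≤ n+1 → A j ≤ A k := by
        intro j k hjk hk
        induction k with
        | zero =>
          have : j = 0 := by omega
          rw [this]
        | succ k ihk =>
          rcases Nat.eq_or_lt_of_le hjk with rfl | hlt
          · exact le_refl _
          · have h1 : A j ≤ A k := ihk (by omega) (by omega)
            have h2 : A k ≤ A (k+1) := by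
              have := hAmono ⟨k, by omega⟩
              simpa using this
            linarith
      set m1 := f (Fin.snoc Q 0) with hm1def
      set m2 := f (Fin.snoc Q 1) with hm2def
      have hm1 : m1 = med (List.ofFn Q ++ List.ofFn b) := hb Q hQ
      have hm2 : m2 = med (List.ofFn Q ++ List.ofFn cb) := hcb Q hQ
      have hL1len : (List.ofFn Q ++ List.ofFn b).length = 2*n+1 := by
        simp [List.length_append]; omega
      have hL2len : (List.ofFn Q ++ List.ofFn cb).length = 2*n+1 := by
        simp [List.length_append]; omega
      have c1l : n+1 ≤ (List.ofFn Q ++ List.ofFn b).countP (fun x => decide (x ≤ m1)) := by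
        have := (med_counts hL1len).1
        rwa [← hm1] at this
      have c1g : n+1 ≤ (List.ofFn Q ++ List.ofFn b).countP (fun x => decide (m1 ≤ x)) := by
        have := (med_counts hL1len).2
        rwa [← hm1] at this
      have c2l : n+1 ≤ (List.ofFn Q ++ List.ofFn cb).countP (fun x => decide (x ≤ m2)) := by
        have := (med_counts hL2len).1
        rwa [← hm2] at this
      have c2g : n+1 ≤ (List.ofFn Q ++ List.ofFn cb).countP (fun x => decide (m2 ≤ x)) := by
        have := (med_counts hL2len).2
        rwa [← hm2] at this
      have d1 : List.ofFn (Fin.snoc Q t : Fin (n+1) → ℝ) = List.ofFn Q ++ [t] := by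
        rw [List.ofFn_succ', List.concat_eq_append]
        congr 1
        · have : (fun i : Fin n => (Fin.snoc Q t : Fin (n+1) → ℝ) i.castSucc) = Q := by
            funext j; rw [Fin.snoc_castSucc]
          rw [this]
        · rw [Fin.snoc_last]
      have d2 : List.ofFn (fun k : Fin (n+2) => A (k:ℕ)) = List.ofFn b ++ [A (n+1)] := by
        rw [List.ofFn_succ', List.concat_eq_append]
        congr 1
        · have : (fun i : Fin (n+1) => A (((i.castSucc : Fin (n+2))):ℕ)) = b := by
            funext k
            rw [Fin.coe_castSucc, hbA k]
          rw [this]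
      have d3 : List.ofFn (fun k : Fin (n+2) => A (k:ℕ)) = A 0 :: List.ofFn cb := by
        rw [List.ofFn_succ]
        congr 1
        have : (fun i : Fin (n+1) => A (((i.succ : Fin (n+2))):ℕ)) = cb := by
          funext k
          rw [Fin.val_succ, hcA k]
        rw [this]
      have hLlen : (List.ofFn (Fin.snoc Q t : Fin (n+1) → ℝ)
          ++ List.ofFn (fun k : Fin (n+2) => A (k:ℕ))).length = 2*(n+1)+1 := by
        simp [List.length_append]; omega
      have e1 : ∀ q : ℝ → Bool,
          (List.ofFn (Fin.snoc Q t : Fin (n+1) → ℝ)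
            ++ List.ofFn (fun k : Fin (n+2) => A (k:ℕ))).countP q
          = (List.ofFn Q ++ List.ofFn b).countP q
            + (if q t then 1 else 0) + (if q (A (n+1)) then 1 else 0) := by
        intro q
        rw [d1, d2]
        simp only [List.countP_append, List.countP_cons, List.countP_nil]
        by_cases h1 : q t <;> by_cases h2 : q (A (n+1)) <;> simp [h1, h2] <;> omega
      have e2 : ∀ q : ℝ → Bool,
          (List.ofFn (Fin.snoc Q t : Fin (n+1) → ℝ)
            ++ List.ofFn (fun k : Fin (n+2) => A (k:ℕ))).countP q
          = (List.ofFn Q ++ List.ofFn cb).countP q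
            + (if q t then 1 else 0) + (if q (A 0) then 1 else 0) := by
        intro q
        rw [d1, d3]
        simp only [List.countP_append, List.countP_cons, List.countP_nil]
        by_cases h1 : q t <;> by_cases h2 : q (A 0) <;> simp [h1, h2] <;> omega
      have hm1m2 : m1 ≤ m2 := by
        rw [hm2]
        apply le_med hL2len
        rw [List.countP_append]
        rw [List.countP_append] at c1g
        have hcc : (List.ofFn b).countP (fun x => decide (m1 ≤ x))
            ≤ (List.ofFn cb).countP (fun x => decide (m1 ≤ x)) := by
          rw [countP_ofFn, countP_ofFn]
          apply Finset.sum_le_sum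
          intro j _
          have hbc : b j ≤ cb j := by
            rw [hbA j, hcA j]
            exact hAmono' _ _ (by omega) (by omega)
          by_cases h : m1 ≤ b j
          · simp [h, le_trans h hbc]
          · simp [h]
        omega
      have hm1top : m1 ≤ A (n+1) := by
        rw [hm1]
        apply med_le hL1len
        rw [List.countP_append]
        have hfull : (List.ofFn b).countP (fun x => decide (x ≤ A (n+1))) = n+1 := by
          rw [List.countP_eq_length.2, List.length_ofFn]
          intro x hx
          obtain ⟨j, hj⟩ := List.mem_ofFn.1 hx
          rw [← hj]
          simp only [decide_eq_true_eq]
          rw [hbA j]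
          exact hAmono' _ _ (by omega) (by omega)
        omega
      have hA0bot : A 0 ≤ m2 := by
        rw [hm2]
        apply le_med hL2len
        rw [List.countP_append]
        have hfull : (List.ofFn cb).countP (fun x => decide (A 0 ≤ x)) = n+1 := by
          rw [List.countP_eq_length.2, List.length_ofFn]
          intro x hx
          obtain ⟨j, hj⟩ := List.mem_ofFn.1 hx
          rw [← hj]
          simp only [decide_eq_true_eq]
          rw [hcA j]
          exact hAmono' _ _ (by omega) (by omega)
        omega
      rcases le_total t m1 with h1 | h1
      · have hx : max m1 (min t m2) = m1 := by
          rw [min_eq_left (le_trans h1 hm1m2), max_eq_left h1]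
        rw [hform, hx]
        refine (med_eq (k := n+1) hLlen ?_ ?_).symm
        · rw [e1 (fun x => decide (x ≤ m1))]
          have ht1 : (if (decide (t ≤ m1)) then 1 else 0) = 1 := by simp [h1]
          omega
        · rw [e1 (fun x => decide (m1 ≤ x))]
          have ht1 : (if (decide (m1 ≤ A (n+1))) then 1 else 0) = 1 := by simp [hm1top]
          omega
      · rcases le_total t m2 with h2 | h2
        · have hx : max m1 (min t m2) = t := by
            rw [min_eq_left h2, max_eq_right h1]
          rw [hform, hx]
          refine (med_eq (k := n+1) hLlen ?_ ?_).symm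
          · rw [e1 (fun x => decide (x ≤ t))]
            have mono1 : (List.ofFn Q ++ List.ofFn b).countP (fun x => decide (x ≤ m1))
                ≤ (List.ofFn Q ++ List.ofFn b).countP (fun x => decide (x ≤ t)) := by
              apply List.countP_mono_left
              intro x _ hx
              simp only [decide_eq_true_eq] at hx ⊢
              linarith
            have ht1 : (if (decide (t ≤ t)) then 1 else 0) = 1 := by simp
            omega
          · rw [e2 (fun x => decide (t ≤ x))]
            have mono2 : (List.ofFn Q ++ List.ofFn cb).countP (fun x => decide (m2 ≤ x))
                ≤ (List.ofFn Q ++ List.ofFn cb).countP (fun x => decide (t ≤ x)) := by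
              apply List.countP_mono_left
              intro x _ hx
              simp only [decide_eq_true_eq] at hx ⊢
              linarith
            have ht1 : (if (decide (t ≤ t)) then 1 else 0) = 1 := by simp
            omega
        · have hx : max m1 (min t m2) = m2 := by
            rw [min_eq_right h2, max_eq_right hm1m2]
          rw [hform, hx]
          refine (med_eq (k := n+1) hLlen ?_ ?_).symm
          · rw [e2 (fun x => decide (x ≤ m2))]
            have ht1 : (if (decide (A 0 ≤ m2)) then 1 else 0) = 1 := by simp [hA0bot]
            omega
          · rw [e2 (fun x => decide (m2 ≤ x))]
            have ht1 : (if (decide (m2 ≤ t)) then 1 else 0) = 1 := by simp [h2]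
            omega

/-- for two alternatives and an arbitrary single-peaked domain, a continuous
mechanism is anonymous and strategyproof iff it is a generalized median rule with
`n + 1` phantoms `α₀ ≤ … ≤ αₙ` in `[0,1]`. -/
theorem generalized_median_characterization {n : ℕ}
    (u : ℝ → ℝ → ℝ) (hu : ∀ p ∈ Set.Icc (0:ℝ) 1, SinglePeaked p (u p))
    (f : (Fin n → ℝ) → ℝ)
    (hfr : ∀ P : Fin n → ℝ, (∀ i, P i ∈ Set.Icc (0:ℝ) 1) → f P ∈ Set.Icc (0:ℝ) 1)
    (hfc : ContinuousOn f {P : Fin n → ℝ | ∀ i, P i ∈ Set.Icc (0:ℝ) 1}) :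
    ((∀ P : Fin n → ℝ, (∀ i, P i ∈ Set.Icc (0:ℝ) 1) →
        ∀ σ : Equiv.Perm (Fin n), f (P ∘ σ) = f P) ∧
      (∀ P : Fin n → ℝ, (∀ i, P i ∈ Set.Icc (0:ℝ) 1) → ∀ i, ∀ p' ∈ Set.Icc (0:ℝ) 1,
        u (P i) (f (Function.update P i p')) ≤ u (P i) (f P))) ↔
      ∃ a : Fin (n + 1) → ℝ, (∀ k, a k ∈ Set.Icc (0:ℝ) 1) ∧ Monotone a ∧
        ∀ P : Fin n → ℝ, (∀ i, P i ∈ Set.Icc (0:ℝ) 1) →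
          f P = med (List.ofFn P ++ List.ofFn a) := by
  constructor
  · rintro ⟨hanon, hsp⟩
    exact forward u hu n f hfr hfc hanon hsp
  · rintro ⟨a, har, ham, hf⟩
    exact backward u hu f hfr a hf
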